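/- Let T and S be trees of finite binary strings, with S nonempty and pruned, meaning that every σ ∈ S is an initial segment of some path of S. Call σ ∈ T terminal if σ ∈ T but neither σ0 nor σ1 belongs to T. Let U = T ∪ { σ ++ τ : σ terminal in T and τ ∈ S }. Then: (1) U is a tree; (2) every element of U is an initial segment of some path of U; and (3) the paths of U are exactly the paths of T together with the sequences σ⌢X obtained by concatenating a terminal node σ of T with a path X of S. -/

import Mathlib

/-- The initial segment of length `n` of an infinite binary sequence. -/
def initSeg (X : ℕ → Bool) (n : ℕ) : List Bool := List.ofFn fun i : Fin n => X i

/-- `X` is a path of the tree `T`: all its initial segments belong to `T`. -/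
def IsPathOf (T : Set (List Bool)) (X : ℕ → Bool) : Prop := ∀ n, initSeg X n ∈ T

/-- Concatenation `σ⌢Y` of a finite string with an infinite sequence. -/
def catSeq (σ : List Bool) (Y : ℕ → Bool) : ℕ → Bool :=
  fun n => if h : n < σ.length then σ.get ⟨n, h⟩ else Y (n - σ.length)

@[simp] lemma initSeg_length (X : ℕ → Bool) (n : ℕ) : (initSeg X n).length = n := by
  simp [initSeg]

@[simp] lemma initSeg_getElem (X : ℕ → Bool) (n i : ℕ) (h : i < (initSeg X n).length) :
    (initSeg X n)[i] = X i := by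
  simp [initSeg]

lemma initSeg_prefix (X : ℕ → Bool) {m n : ℕ} (h : m ≤ n) :
    initSeg X m <+: initSeg X n := by
  rw [List.prefix_iff_eq_take]
  apply List.ext_getElem
  · simp [Nat.min_eq_left h]
  · intro i h1 h2
    simp [List.getElem_take]

lemma initSeg_eq_of_prefix {σ : List Bool} {X : ℕ → Bool} {n : ℕ}
    (h : σ <+: initSeg X n) : initSeg X σ.length = σ := by
  apply List.ext_getElem (by simp)
  intro i h1 h2
  rw [initSeg_getElem, h.getElem h2, initSeg_getElem]

lemma initSeg_catSeq_of_le (σ : List Bool) (Y : ℕ → Bool) {n : ℕ} (h : n ≤ σ.length) :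
    initSeg (catSeq σ Y) n = σ.take n := by
  apply List.ext_getElem (by simp [Nat.min_eq_left h])
  intro i h1 h2
  have hi : i < σ.length := lt_of_lt_of_le (by simpa using h1) h
  simp [catSeq, hi, List.getElem_take]

lemma initSeg_catSeq_add (σ : List Bool) (Y : ℕ → Bool) (m : ℕ) :
    initSeg (catSeq σ Y) (σ.length + m) = σ ++ initSeg Y m := by
  apply List.ext_getElem (by simp)
  intro i h1 h2
  rw [initSeg_getElem]
  by_cases hi : i < σ.length
  · rw [List.getElem_append_left hi]
    simp [catSeq, hi]
  · rw [List.getElem_append_right (le_of_not_gt hi)]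
    simp [catSeq, hi]

lemma initSeg_add (X : ℕ → Bool) (k m : ℕ) :
    initSeg X (k + m) = initSeg X k ++ initSeg (fun i => X (k + i)) m := by
  apply List.ext_getElem (by simp)
  intro i h1 h2
  rw [initSeg_getElem]
  by_cases hi : i < k
  · rw [List.getElem_append_left (by simpa using hi)]
    simp
  · rw [List.getElem_append_right (by simpa using le_of_not_gt hi)]
    simp
    congr 1
    omega

/-- `σ` is terminal in `T`. -/
def Terminal' (T : Set (List Bool)) (σ : List Bool) : Prop :=
  σ ∈ T ∧ σ ++ [false] ∉ T ∧ σ ++ [true] ∉ T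

/-- The tree `U`. -/
def Uset (T S : Set (List Bool)) : Set (List Bool) :=
  T ∪ {υ | ∃ σ τ, Terminal' T σ ∧ τ ∈ S ∧ υ = σ ++ τ}

lemma terminal_eq_of_prefix {T : Set (List Bool)}
    (hT : ∀ σ τ : List Bool, σ <+: τ → τ ∈ T → σ ∈ T)
    {a b : List Bool} (ha : Terminal' T a) (hb : b ∈ T) (hab : a <+: b) : a = b := by
  by_contra hne
  have hlt : a.length < b.length :=
    lt_of_le_of_ne hab.length_le (fun h => hne (hab.eq_of_length h))
  have hpre : a ++ [b[a.length]] <+: b := by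
    have h1 := List.take_concat_get hlt
    rw [List.concat_eq_append] at h1
    rw [List.prefix_iff_eq_take] at hab
    rw [← hab] at h1
    rw [h1]
    exact List.take_prefix _ _
  have hmem : a ++ [b[a.length]] ∈ T := hT _ _ hpre hb
  cases hv : b[a.length] with
  | false => rw [hv] at hmem; exact ha.2.1 hmem
  | true => rw [hv] at hmem; exact ha.2.2 hmem

lemma terminal_unique {T : Set (List Bool)}
    (hT : ∀ σ τ : List Bool, σ <+: τ → τ ∈ T → σ ∈ T)
    {a a' ρ : List Bool} (ha : Terminal' T a) (ha' : Terminal' T a')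
    (h1 : a <+: ρ) (h2 : a' <+: ρ) : a = a' := by
  rcases List.prefix_or_prefix_of_prefix h1 h2 with h | h
  · exact terminal_eq_of_prefix hT ha ha'.1 h
  · exact (terminal_eq_of_prefix hT ha' ha.1 h).symm

lemma catSeq_isPathOf_U {T S : Set (List Bool)}
    (hT : ∀ σ τ : List Bool, σ <+: τ → τ ∈ T → σ ∈ T)
    {σ : List Bool} {Y : ℕ → Bool} (hσ : Terminal' T σ) (hY : IsPathOf S Y) :
    IsPathOf (Uset T S) (catSeq σ Y) := by
  intro n
  rcases le_or_gt n σ.length with h | h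
  · left
    refine hT _ _ ?_ hσ.1
    rw [initSeg_catSeq_of_le σ Y h]
    exact List.take_prefix _ _
  · right
    obtain ⟨m, rfl⟩ : ∃ m, n = σ.length + m := ⟨n - σ.length, by omega⟩
    exact ⟨σ, initSeg Y m, hσ, hY m, initSeg_catSeq_add σ Y m⟩

lemma main_lemma (T S : Set (List Bool))
    (hT : ∀ σ τ : List Bool, σ <+: τ → τ ∈ T → σ ∈ T)
    (hS : ∀ σ τ : List Bool, σ <+: τ → τ ∈ S → σ ∈ S)
    (hSne : S.Nonempty)
    (hSpruned : ∀ σ ∈ S, ∃ X, IsPathOf S X ∧ initSeg X σ.length = σ) :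
    (∀ σ τ : List Bool, σ <+: τ → τ ∈ Uset T S → σ ∈ Uset T S) ∧
    (∀ σ ∈ Uset T S, ∃ X, IsPathOf (Uset T S) X ∧ initSeg X σ.length = σ) ∧
    (∀ X : ℕ → Bool, IsPathOf (Uset T S) X ↔
      (IsPathOf T X ∨ ∃ σ Y, Terminal' T σ ∧ IsPathOf S Y ∧ X = catSeq σ Y)) := by
  refine ⟨?_, ?_, ?_⟩
  · -- (1)
    rintro σ τ hpre (hτ | ⟨a, b, ha, hb, rfl⟩)
    · exact Or.inl (hT _ _ hpre hτ)
    · rcases List.prefix_or_prefix_of_prefix hpre (List.prefix_append a b) with h1 | h1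
      · exact Or.inl (hT _ _ h1 ha.1)
      · obtain ⟨c, rfl⟩ := h1
        right
        refine ⟨a, c, ha, hS _ _ ?_ hb, rfl⟩
        rwa [List.prefix_append_right_inj] at hpre
  · -- (2)
    obtain ⟨ρ, hρ⟩ := hSne
    have hnil : [] ∈ S := hS _ _ List.nil_prefix hρ
    rintro σ (hσ | ⟨a, b, ha, hb, rfl⟩)
    · by_cases hterm : ∃ τ, σ <+: τ ∧ Terminal' T τ
      · obtain ⟨τ, hστ, hτ⟩ := hterm
        obtain ⟨Y, hY, -⟩ := hSpruned [] hnil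
        refine ⟨catSeq τ Y, catSeq_isPathOf_U hT hτ hY, ?_⟩
        rw [initSeg_catSeq_of_le _ _ hστ.length_le]
        exact (List.prefix_iff_eq_take.mp hστ).symm
      · push_neg at hterm
        have step : ∀ τ : List Bool, τ ∈ T → σ <+: τ → ∃ b : Bool, τ ++ [b] ∈ T := by
          intro τ hτT hστ
          by_contra hnb; push_neg at hnb
          exact hterm τ hστ ⟨hτT, hnb false, hnb true⟩
        obtain ⟨f, hf0, hfmem, hflen, hfstep⟩ :
            ∃ f : ℕ → List Bool, f 0 = σ ∧ (∀ n, f n ∈ T) ∧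
              (∀ n, (f n).length = σ.length + n) ∧ (∀ n, f n <+: f (n + 1)) := by
          have step' : ∀ p : {l : List Bool // l ∈ T ∧ σ <+: l},
              ∃ q : {l : List Bool // l ∈ T ∧ σ <+: l},
                p.1 <+: q.1 ∧ q.1.length = p.1.length + 1 := by
            rintro ⟨l, hl, hσl⟩
            obtain ⟨b, hbT⟩ := step l hl hσl
            exact ⟨⟨l ++ [b], hbT, hσl.trans (List.prefix_append _ _)⟩,
              List.prefix_append _ _, by simp⟩
          choose g hg1 hg2 using step'
          refine ⟨fun n => (g^[n] ⟨σ, hσ, List.prefix_refl σ⟩).1, by simp, ?_, ?_, ?_⟩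
          · exact fun n => (g^[n] _).2.1
          · intro n
            induction n with
            | zero => simp
            | succ k ih =>
              have ih' : (↑(g^[k] ⟨σ, hσ, List.prefix_refl σ⟩) : List Bool).length
                  = σ.length + k := ih
              simp only [Function.iterate_succ_apply']
              rw [hg2]
              omega
          · intro n
            simp only [Function.iterate_succ_apply']
            exact hg1 _
        have hmono : ∀ m n, m ≤ n → f m <+: f n := by
          intro m n h
          induction h with
          | refl => exact List.prefix_refl _
          | step _ ih => exact ih.trans (hfstep _)
        set X : ℕ → Bool := fun n => (f (n + 1)).getD n false with hXdef
        have hgetX : ∀ (i n : ℕ) (h : i < (f n).length), X i = (f n)[i] := by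
          intro i n h
          have h1 : i < (f (i + 1)).length := by rw [hflen]; omega
          have hN1 : f (i + 1) <+: f (max (i + 1) n) := hmono _ _ (le_max_left _ _)
          have hN2 : f n <+: f (max (i + 1) n) := hmono _ _ (le_max_right _ _)
          show (f (i + 1)).getD i false = (f n)[i]
          rw [List.getD_eq_getElem _ _ h1, hN1.getElem h1, ← hN2.getElem h]
        have hinit : ∀ n, initSeg X (σ.length + n) = f n := by
          intro n
          apply List.ext_getElem (by simp [hflen])
          intro i h1 h2
          rw [initSeg_getElem]
          exact hgetX i n h2
        have h0 : initSeg X σ.length = σ := by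
          have := hinit 0
          rwa [Nat.add_zero, hf0] at this
        refine ⟨X, ?_, h0⟩
        intro n
        rcases le_or_gt n σ.length with h | h
        · refine Or.inl (hT _ σ ?_ hσ)
          rw [← h0]
          exact initSeg_prefix X h
        · have hn : σ.length + (n - σ.length) = n := by omega
          refine Or.inl ?_
          rw [← hn, hinit]
          exact hfmem _
    · obtain ⟨Y, hY, hYb⟩ := hSpruned b hb
      refine ⟨catSeq a Y, catSeq_isPathOf_U hT ha hY, ?_⟩
      rw [List.length_append, initSeg_catSeq_add, hYb]
  · -- (3)
    intro X
    constructor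
    · intro hXU
      by_cases hall : ∀ n, initSeg X n ∈ T
      · exact Or.inl hall
      · push_neg at hall
        obtain ⟨n, hn⟩ := hall
        rcases hXU n with h | ⟨a, b, ha, hb, hab⟩
        · exact absurd h hn
        have haX : initSeg X a.length = a :=
          initSeg_eq_of_prefix (by rw [hab]; exact List.prefix_append a b)
        set Y : ℕ → Bool := fun k => X (a.length + k) with hYdef
        right
        refine ⟨a, Y, ha, ?_, ?_⟩
        · intro m
          set N := max n (a.length + m) with hN
          rcases hXU N with hNT | ⟨a', b', ha', hb', hab'⟩
          · exact absurd (hT _ _ (initSeg_prefix X (le_max_left _ _)) hNT) hn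
          · have haa' : a = a' := by
              refine terminal_unique (ρ := initSeg X N) hT ha ha' ?_ ?_
              · rw [← haX]
                have han : a.length ≤ n := by
                  have hl := congrArg List.length hab
                  simp [List.length_append] at hl
                  omega
                exact initSeg_prefix X (le_trans han (le_max_left n _))
              · rw [hab']
                exact List.prefix_append a' b'
            have hXam : initSeg X (a.length + m) = a ++ initSeg Y m := by
              rw [initSeg_add, haX, hYdef]
            have hsub : initSeg X (a.length + m) <+: initSeg X N :=
              initSeg_prefix X (le_max_right _ _)
            rw [hXam, hab', ← haa', List.prefix_append_right_inj] at hsub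
            exact hS _ _ hsub hb'
        · funext i
          by_cases hi : i < a.length
          · have hpa : a <+: initSeg X n := by rw [hab]; exact List.prefix_append a b
            have h2 : a[i] = X i := by
              rw [hpa.getElem hi]
              simp
            simp [catSeq, hi, h2]
          · simp only [catSeq, dif_neg hi]
            show X i = X (a.length + (i - a.length))
            congr 1
            omega
    · rintro (hXT | ⟨σ, Y, hσ, hY, rfl⟩)
      · exact fun n => Or.inl (hXT n)
      · exact catSeq_isPathOf_U hT hσ hY

theorem tree_append_on_terminal_nodes
    (T S : Set (List Bool))
    (hT : ∀ σ τ : List Bool, σ <+: τ → τ ∈ T → σ ∈ T)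
    (hS : ∀ σ τ : List Bool, σ <+: τ → τ ∈ S → σ ∈ S)
    (hSne : S.Nonempty)
    (hSpruned : ∀ σ ∈ S, ∃ X, IsPathOf S X ∧ initSeg X σ.length = σ) :
    letI Terminal : List Bool → Prop :=
      fun σ => σ ∈ T ∧ σ ++ [false] ∉ T ∧ σ ++ [true] ∉ T
    letI U : Set (List Bool) :=
      T ∪ {υ | ∃ σ τ, Terminal σ ∧ τ ∈ S ∧ υ = σ ++ τ}
    -- (1) U is a tree
    (∀ σ τ : List Bool, σ <+: τ → τ ∈ U → σ ∈ U) ∧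
    -- (2) every element of U is an initial segment of a path of U
    (∀ σ ∈ U, ∃ X, IsPathOf U X ∧ initSeg X σ.length = σ) ∧
    -- (3) the paths of U are exactly the paths of T together with the σ⌢X's
    (∀ X : ℕ → Bool, IsPathOf U X ↔
      (IsPathOf T X ∨ ∃ σ Y, Terminal σ ∧ IsPathOf S Y ∧ X = catSeq σ Y)) := by
  exact main_lemma T S hT hS hSne hSpruned
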